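/- For all positive integers n, f(n) = ∑_{d=1}^{n} μ(d)·(2^{⌊n/d⌋} − 1), where μ is the Möbius function. -/
import Mathlib


/-- `f n` is the number of relatively prime subsets of `{1,2,...,n}`, i.e. the
number of nonempty subsets `A` of `{1,...,n}` with `gcd(A) = 1`. -/
def f (n : ℕ) : ℕ :=
  ((Finset.Icc 1 n).powerset.filter (fun A => A.Nonempty ∧ A.gcd id = 1)).card



lemma sum_divisors_moebius' (m : ℕ) :
    ∑ d ∈ m.divisors, (ArithmeticFunction.moebius d : ℤ) = if m = 1 then 1 else 0 := by
  rw [← ArithmeticFunction.coe_mul_zeta_apply,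
    ArithmeticFunction.moebius_mul_coe_zeta, ArithmeticFunction.one_apply]

theorem f_eq_sum_moebius (n : ℕ) (hn : 0 < n) :
    (f n : ℤ) = ∑ d ∈ Finset.Icc 1 n,
      ArithmeticFunction.moebius d * (2 ^ (n / d) - 1) := by
  classical
  set P := (Finset.Icc 1 n).powerset.filter (fun A => A.Nonempty) with hP
  -- basic facts about gcds of members of P
  have hgcd : ∀ A ∈ P, 1 ≤ A.gcd id ∧ A.gcd id ≤ n := by
    intro A hA
    obtain ⟨hsub, hne⟩ := Finset.mem_filter.mp hA
    rw [Finset.mem_powerset] at hsub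
    obtain ⟨a, ha⟩ := hne
    have ha' := Finset.mem_Icc.mp (hsub ha)
    have hdvd : A.gcd id ∣ a := Finset.gcd_dvd ha
    have hapos : 0 < a := ha'.1
    constructor
    · exact Nat.pos_of_dvd_of_pos hdvd hapos
    · exact le_trans (Nat.le_of_dvd hapos hdvd) ha'.2
  -- step 1: per-d count
  have hcard : ∀ d ∈ Finset.Icc 1 n,
      ((2 : ℤ) ^ (n / d) - 1) =
        ((P.filter (fun A => d ∣ A.gcd id)).card : ℤ) := by
    intro d hd
    set S := (Finset.Icc 1 n).filter (fun a => d ∣ a) with hS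
    have hScard : S.card = n / d := by
      have h : Finset.Icc 1 n = Finset.Ioc 0 n := by
        ext x; simp [Nat.lt_iff_add_one_le]
      rw [hS, h]
      exact Nat.Ioc_filter_dvd_card_eq_div n d
    have hset : P.filter (fun A => d ∣ A.gcd id)
        = S.powerset.filter (fun A => A.Nonempty) := by
      ext A
      simp only [hP, hS, Finset.mem_filter, Finset.mem_powerset, and_assoc,
        Finset.filter_filter, Finset.subset_iff]
      constructor
      · rintro ⟨hsub, hne, hdvd⟩
        exact ⟨fun a ha => ⟨hsub ha, hdvd.trans (Finset.gcd_dvd ha)⟩, hne⟩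
      · rintro ⟨hsub, hne⟩
        exact ⟨fun a ha => (hsub ha).1, hne,
          Finset.dvd_gcd fun a ha => (hsub ha).2⟩
    have hfe : S.powerset.filter (fun A => A.Nonempty)
        = S.powerset.erase ∅ := by
      ext A
      simp [Finset.nonempty_iff_ne_empty, and_comm]
    rw [hset, hfe, Finset.card_erase_of_mem (Finset.empty_mem_powerset S),
      Finset.card_powerset, hScard]
    have h1 : 1 ≤ 2 ^ (n / d) := Nat.one_le_two_pow
    push_cast [h1]
    ring
  calc (f n : ℤ)
      = ∑ A ∈ P, (if A.gcd id = 1 then (1 : ℤ) else 0) := by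
        rw [← Finset.sum_filter, Finset.sum_const, nsmul_eq_mul, mul_one, f, hP,
          Finset.filter_filter]
    _ = ∑ A ∈ P, ∑ d ∈ (A.gcd id).divisors, (ArithmeticFunction.moebius d : ℤ) := by
        refine Finset.sum_congr rfl fun A hA => ?_
        rw [sum_divisors_moebius']
    _ = ∑ A ∈ P, ∑ d ∈ Finset.Icc 1 n, (if d ∣ A.gcd id then (ArithmeticFunction.moebius d : ℤ) else 0) := by
        refine Finset.sum_congr rfl fun A hA => ?_
        rw [← Finset.sum_filter]
        congr 1
        ext d
        obtain ⟨h1, h2⟩ := hgcd A hA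
        simp only [Nat.mem_divisors, Finset.mem_filter, Finset.mem_Icc]
        constructor
        · rintro ⟨hdvd, -⟩
          exact ⟨⟨Nat.pos_of_dvd_of_pos hdvd h1,
            le_trans (Nat.le_of_dvd h1 hdvd) h2⟩, hdvd⟩
        · rintro ⟨-, hdvd⟩
          exact ⟨hdvd, by omega⟩
    _ = ∑ d ∈ Finset.Icc 1 n, ∑ A ∈ P, (if d ∣ A.gcd id then (ArithmeticFunction.moebius d : ℤ) else 0) :=
        Finset.sum_comm
    _ = ∑ d ∈ Finset.Icc 1 n, (ArithmeticFunction.moebius d : ℤ) * (2 ^ (n / d) - 1) := by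
        refine Finset.sum_congr rfl fun d hd => ?_
        rw [← Finset.sum_filter, Finset.sum_const, hcard d hd]
        simp [mul_comm]
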